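/- Characterization of maximally-entangled QCCEs in maximally-entangled games (Appendix D Theorem): Fix real payoff matrices (a_{pq}) and (b_{pq}) indexed by p,q ∈ {0,1}, and let R_1 = Σ_{p,q} a_{pq}·|e_{pq}⟩⟨e_{pq}| and R_2 = Σ_{p,q} b_{pq}·|e_{pq}⟩⟨e_{pq}| where {|e_{pq}⟩} is the Bell basis of ℂ²⊗ℂ². Let (λ_{pq}) be nonnegative reals with Σ_{p,q} λ_{pq} = 1 and set ρ* = Σ_{p,q} λ_{pq}·|e_{pq}⟩⟨e_{pq}|. Then ρ* is a quantum coarse correlated equilibrium of the two-player game with utilities u_1(ρ) = Tr(R_1 ρ), u_2(ρ) = Tr(R_2 ρ) — i.e. Tr(R_1·(ρ_1' ⊗ Tr_A ρ*)) ≤ Tr(R_1·ρ*) for all density matrices ρ_1' on ℂ² and Tr(R_2·((Tr_B ρ*) ⊗ ρ_2')) ≤ Tr(R_2·ρ*) for all density matrices ρ_2' on ℂ², where the second deviated state places ρ_2' on Bob's register — if and only if Σ_{p,q} a_{pq}·λ_{pq} ≥ (1/4)·Σ_{p,q} a_{pq} and Σ_{p,q} b_{pq}·λ_{pq} ≥ (1/4)·Σ_{p,q}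 b_{pq}. -/

import Mathlib

open Matrix Kronecker
open scoped ComplexOrder

/-- A density matrix: positive semidefinite with trace 1. -/
def IsDensity {d : Type*} [Fintype d] (ρ : Matrix d d ℂ) : Prop :=
  ρ.PosSemidef ∧ ρ.trace = 1

/-- The Bell basis vector `|e_{pq}⟩` of `ℂ²⊗ℂ²`:
`e_{pq}(a,b) = (−1)^{q·a}/√2` if `b = a + p` (mod 2), and `0` otherwise. -/
noncomputable def bell (p q : Fin 2) : Fin 2 × Fin 2 → ℂ :=
  fun ab => if ab.2 = ab.1 + p then ((-1 : ℂ) ^ (q.val * ab.1.val)) / (Real.sqrt 2 : ℂ) else 0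

/-- The rank-one projection `|e_{pq}⟩⟨e_{pq}|`. -/
noncomputable def bellProj (p q : Fin 2) :
    Matrix (Fin 2 × Fin 2) (Fin 2 × Fin 2) ℂ :=
  fun x y => bell p q x * (starRingEnd ℂ) (bell p q y)

/-- Partial trace over the first register (the marginal on Bob's register). -/
noncomputable def trA (M : Matrix (Fin 2 × Fin 2) (Fin 2 × Fin 2) ℂ) :
    Matrix (Fin 2) (Fin 2) ℂ :=
  fun b b' => ∑ a, M (a, b) (a, b')

/-- Partial trace over the second register (the marginal on Alice's register). -/
noncomputable def trB (M : Matrix (Fin 2 × Fin 2) (Fin 2 × Fin 2) ℂ) :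
    Matrix (Fin 2) (Fin 2) ℂ :=
  fun a a' => ∑ b, M (a, b) (a', b)

def bellN (p q : Fin 2) : Fin 2 × Fin 2 → ℂ :=
  fun ab => if ab.2 = ab.1 + p then (-1 : ℂ) ^ (q.val * ab.1.val) else 0

lemma bellProj_eq (p q : Fin 2) (x y : Fin 2 × Fin 2) :
    bellProj p q x y = bellN p q x * bellN p q y / 2 := by
  have hs : (Real.sqrt 2 : ℂ) * (Real.sqrt 2 : ℂ) = 2 := by
    rw [← Complex.ofReal_mul]
    norm_num [Real.mul_self_sqrt]
  have hs0 : (Real.sqrt 2 : ℂ) ≠ 0 := by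
    intro h
    rw [h, mul_zero] at hs
    norm_num at hs
  simp only [bellProj, bell, bellN]
  split_ifs with h1 h2 h2 <;> simp [map_div₀, map_pow, Complex.conj_ofReal]
  field_simp

  rw [sq]; exact hs.symm

set_option maxHeartbeats 1000000 in
lemma L1 (p q p' q' : Fin 2) :
    (bellProj p q * bellProj p' q').trace = if p = p' ∧ q = q' then 1 else 0 := by
  fin_cases p <;> fin_cases q <;> fin_cases p' <;> fin_cases q' <;>
    · simp only [Matrix.trace, Matrix.mul_apply, Fin.sum_univ_two, Fintype.sum_prod_type,
        Matrix.diag_apply, bellProj_eq, bellN]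
      simp
      try norm_num

set_option maxHeartbeats 1000000 in
lemma L2A (p q : Fin 2) : trA (bellProj p q) = (1/2 : ℂ) • 1 := by
  ext u v
  fin_cases p <;> fin_cases q <;> fin_cases u <;> fin_cases v <;>
    · simp only [trA, Fin.sum_univ_two, bellProj_eq, bellN, Matrix.smul_apply,
        Matrix.one_apply]
      simp
      try norm_num

set_option maxHeartbeats 1000000 in
lemma L2B (p q : Fin 2) : trB (bellProj p q) = (1/2 : ℂ) • 1 := by
  ext u v
  fin_cases p <;> fin_cases q <;> fin_cases u <;> fin_cases v <;>
    · simp only [trB, Fin.sum_univ_two, bellProj_eq, bellN, Matrix.smul_apply,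
        Matrix.one_apply]
      simp
      try norm_num

set_option maxHeartbeats 1000000 in
lemma L3A (p q : Fin 2) (X : Matrix (Fin 2) (Fin 2) ℂ) :
    (bellProj p q * (X ⊗ₖ ((1/2 : ℂ) • 1))).trace = X.trace / 4 := by
  fin_cases p <;> fin_cases q <;>
    · simp only [Matrix.trace, Matrix.mul_apply, Fin.sum_univ_two, Fintype.sum_prod_type,
        Matrix.diag_apply, bellProj_eq, bellN, Matrix.kroneckerMap_apply,
        Matrix.smul_apply, Matrix.one_apply, smul_eq_mul]
      simp
      ring

set_option maxHeartbeats 1000000 in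
lemma L3B (p q : Fin 2) (X : Matrix (Fin 2) (Fin 2) ℂ) :
    (bellProj p q * (((1/2 : ℂ) • 1) ⊗ₖ X)).trace = X.trace / 4 := by
  fin_cases p <;> fin_cases q <;>
    · simp only [Matrix.trace, Matrix.mul_apply, Fin.sum_univ_two, Fintype.sum_prod_type,
        Matrix.diag_apply, bellProj_eq, bellN, Matrix.kroneckerMap_apply,
        Matrix.smul_apply, Matrix.one_apply, smul_eq_mul]
      simp
      ring

lemma key1 (c l : Fin 2 → Fin 2 → ℝ) :
    ((∑ p, ∑ q, (c p q : ℂ) • bellProj p q) * (∑ p, ∑ q, (l p q : ℂ) • bellProj p q)).trace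
      = ((∑ p, ∑ q, c p q * l p q : ℝ) : ℂ) := by
  simp only [Fin.sum_univ_two, Matrix.add_mul, Matrix.mul_add, Matrix.smul_mul,
    Matrix.mul_smul, Matrix.trace_add, Matrix.trace_smul, smul_smul, L1, smul_eq_mul]
  simp
  ring

lemma key2A (c : Fin 2 → Fin 2 → ℝ) (X : Matrix (Fin 2) (Fin 2) ℂ) (hX : X.trace = 1) :
    ((∑ p, ∑ q, (c p q : ℂ) • bellProj p q) * (X ⊗ₖ ((1/2 : ℂ) • 1))).trace
      = (((∑ p, ∑ q, c p q) / 4 : ℝ) : ℂ) := by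
  simp only [Fin.sum_univ_two, Matrix.add_mul, Matrix.smul_mul, Matrix.trace_add,
    Matrix.trace_smul, L3A, hX, smul_eq_mul]
  push_cast
  ring

lemma key2B (c : Fin 2 → Fin 2 → ℝ) (X : Matrix (Fin 2) (Fin 2) ℂ) (hX : X.trace = 1) :
    ((∑ p, ∑ q, (c p q : ℂ) • bellProj p q) * (((1/2 : ℂ) • 1) ⊗ₖ X)).trace
      = (((∑ p, ∑ q, c p q) / 4 : ℝ) : ℂ) := by
  simp only [Fin.sum_univ_two, Matrix.add_mul, Matrix.smul_mul, Matrix.trace_add,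
    Matrix.trace_smul, L3B, hX, smul_eq_mul]
  push_cast
  ring

set_option maxHeartbeats 1000000 in
lemma key3A (l : Fin 2 → Fin 2 → ℝ) (h : ∑ p, ∑ q, l p q = 1) :
    trA (∑ p, ∑ q, (l p q : ℂ) • bellProj p q) = (1/2 : ℂ) • 1 := by
  have hc : ((l 0 0 : ℂ)) + l 0 1 + l 1 0 + l 1 1 = 1 := by
    simp only [Fin.sum_univ_two] at h
    have h' : l 0 0 + l 0 1 + l 1 0 + l 1 1 = 1 := by linarith
    exact_mod_cast h'
  ext u v
  fin_cases u <;> fin_cases v <;>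
    · simp [trA, Fin.sum_univ_two, Matrix.sum_apply, Matrix.smul_apply, bellProj_eq,
        bellN, Matrix.one_apply]
      try linear_combination hc / 2

set_option maxHeartbeats 1000000 in
lemma key3B (l : Fin 2 → Fin 2 → ℝ) (h : ∑ p, ∑ q, l p q = 1) :
    trB (∑ p, ∑ q, (l p q : ℂ) • bellProj p q) = (1/2 : ℂ) • 1 := by
  have hc : ((l 0 0 : ℂ)) + l 0 1 + l 1 0 + l 1 1 = 1 := by
    simp only [Fin.sum_univ_two] at h
    have h' : l 0 0 + l 0 1 + l 1 0 + l 1 1 = 1 := by linarith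
    exact_mod_cast h'
  ext u v
  fin_cases u <;> fin_cases v <;>
    · simp [trB, Fin.sum_univ_two, Matrix.sum_apply, Matrix.smul_apply, bellProj_eq,
        bellN, Matrix.one_apply]
      try linear_combination hc / 2

lemma halfone_density : (IsDensity ((1/2 : ℂ) • (1 : Matrix (Fin 2) (Fin 2) ℂ))) := by
  constructor
  · rw [show ((1/2 : ℂ) • (1 : Matrix (Fin 2) (Fin 2) ℂ))
        = Matrix.diagonal (fun _ => (1/2 : ℂ)) from by
      ext i j; by_cases h : i = j <;> simp [Matrix.one_apply, Matrix.diagonal_apply, h]]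
    refine Matrix.posSemidef_diagonal_iff.mpr fun i => ?_
    have h0 : ((0:ℝ):ℂ) ≤ ((1/2:ℝ):ℂ) := by
      rw [Complex.real_le_real]; norm_num
    simpa using h0
  · simp [Matrix.trace_smul, Matrix.trace_one]

/-- Characterization of maximally-entangled QCCEs in maximally-entangled games
(Appendix D Theorem). -/
theorem stmt_13 (a b : Fin 2 → Fin 2 → ℝ)
    (lam : Fin 2 → Fin 2 → ℝ) (hlam : ∀ p q, 0 ≤ lam p q)
    (hsum : ∑ p, ∑ q, lam p q = 1) :
    (let R₁ : Matrix (Fin 2 × Fin 2) (Fin 2 × Fin 2) ℂ :=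
        ∑ p, ∑ q, (a p q : ℂ) • bellProj p q
     let R₂ : Matrix (Fin 2 × Fin 2) (Fin 2 × Fin 2) ℂ :=
        ∑ p, ∑ q, (b p q : ℂ) • bellProj p q
     let ρstar : Matrix (Fin 2 × Fin 2) (Fin 2 × Fin 2) ℂ :=
        ∑ p, ∑ q, (lam p q : ℂ) • bellProj p q
     ((∀ ρ₁' : Matrix (Fin 2) (Fin 2) ℂ, IsDensity ρ₁' →
        ((R₁ * (ρ₁' ⊗ₖ trA ρstar)).trace).re ≤ ((R₁ * ρstar).trace).re)
      ∧ (∀ ρ₂' : Matrix (Fin 2) (Fin 2) ℂ, IsDensity ρ₂' →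
        ((R₂ * ((trB ρstar) ⊗ₖ ρ₂')).trace).re ≤ ((R₂ * ρstar).trace).re)))
    ↔ ((1 / 4 : ℝ) * ∑ p, ∑ q, a p q ≤ ∑ p, ∑ q, a p q * lam p q
        ∧ (1 / 4 : ℝ) * ∑ p, ∑ q, b p q ≤ ∑ p, ∑ q, b p q * lam p q) := by
  constructor
  · intro h
    obtain ⟨hA, hB⟩ := h
    have hdA := hA _ halfone_density
    have hdB := hB _ halfone_density
    rw [key3A lam hsum, key2A a _ (halfone_density.2), key1 a lam] at hdA
    rw [key3B lam hsum, key2B b _ (halfone_density.2), key1 b lam] at hdB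
    rw [Complex.ofReal_re, Complex.ofReal_re] at hdA hdB
    exact ⟨by linarith, by linarith⟩
  · intro h
    refine ⟨fun ρ₁' hd => ?_, fun ρ₂' hd => ?_⟩
    · rw [key3A lam hsum, key2A a ρ₁' hd.2, key1 a lam,
        Complex.ofReal_re, Complex.ofReal_re]
      linarith [h.1]
    · rw [key3B lam hsum, key2B b ρ₂' hd.2, key1 b lam,
        Complex.ofReal_re, Complex.ofReal_re]
      linarith [h.2]
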